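/- Let D be a nonempty digraph with χ⃗(D) ≤ k for some integer k ≥ 1. Then there exist vertices u and w of D such that χ⃗(D[N⁺(u) ∪ N⁻(w)]) ≤ k − 1. -/

import Mathlib

/-- A set `S` of vertices of the digraph with arc relation `A` is acyclic. -/
def AcyclicSet {V : Type*} (A : V → V → Prop) (S : Set V) : Prop :=
  ∀ x, ¬ Relation.TransGen (fun a b => a ∈ S ∧ b ∈ S ∧ A a b) x x

/-- `D[S]` can be properly dicolored with at most `n` colors. -/
def HasDicoloringOn {V : Type*} (A : V → V → Prop) (S : Set V) (n : ℕ) : Prop :=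
  ∃ f : V → ℕ, (∀ v ∈ S, f v < n) ∧ ∀ i, AcyclicSet A {v | v ∈ S ∧ f v = i}

/-- The dichromatic number of `D[S]`. -/
noncomputable def dichromOn {V : Type*} (A : V → V → Prop) (S : Set V) : ℕ :=
  sInf {n | HasDicoloringOn A S n}

lemma acyclic_mono {V : Type*} {A : V → V → Prop} {S T : Set V} (h : S ⊆ T)
    (hT : AcyclicSet A T) : AcyclicSet A S := by
  intro x hx
  exact hT x (Relation.TransGen.mono (fun a b hab => ⟨h hab.1, h hab.2.1, hab.2.2⟩) x x hx)

/-- If `D` is a nonempty digraph with `χ⃗(D) ≤ k`, `k ≥ 1`, then there exist vertices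
`u` and `w` with `χ⃗(D[N⁺(u) ∪ N⁻(w)]) ≤ k - 1`. -/
theorem stmt12 {V : Type*} [Fintype V] [Nonempty V] (A : V → V → Prop)
    (hirr : ∀ x, ¬ A x x) (k : ℕ) (hk : 1 ≤ k) (hD : dichromOn A Set.univ ≤ k) :
    ∃ u w : V, dichromOn A ({x | A u x} ∪ {x | A x w}) ≤ k - 1 := by
  classical
  -- The set of valid numbers of colors is nonempty (use a rainbow coloring).
  have hne : {n | HasDicoloringOn A Set.univ n}.Nonempty := by
    refine ⟨Fintype.card V, fun v => (Fintype.equivFin V v : ℕ), fun v _ => (Fintype.equivFin V v).isLt, ?_⟩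
    intro i x hx
    have hstep : ∀ a b : V, ¬ ((a ∈ Set.univ ∧ (Fintype.equivFin V a : ℕ) = i) ∧
        (b ∈ Set.univ ∧ (Fintype.equivFin V b : ℕ) = i) ∧ A a b) := by
      rintro a b ⟨⟨-, ha⟩, ⟨-, hb⟩, hab⟩
      have : a = b := (Fintype.equivFin V).injective (Fin.ext (ha.trans hb.symm))
      exact hirr a (this ▸ hab)
    cases hx with
    | single h => exact hstep _ _ h
    | tail _ h => exact hstep _ _ h
  -- Get a coloring with k colors.
  obtain ⟨f, hf1, hf2⟩ : HasDicoloringOn A Set.univ k := by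
    obtain ⟨f, h1, h2⟩ := Nat.sInf_mem hne
    exact ⟨f, fun v hv => lt_of_lt_of_le (h1 v hv) hD, h2⟩
  obtain ⟨v0⟩ := ‹Nonempty V›
  set c := f v0 with hc
  -- Permute colors so that v0's class becomes class 0.
  set f' : V → ℕ := fun v => Equiv.swap 0 c (f v) with hf'
  have hbound : ∀ v, f' v < k := by
    intro v
    simp only [hf', Equiv.swap_apply_def]
    split_ifs
    · exact hf1 v0 (Set.mem_univ _)
    · exact hk
    · exact hf1 v (Set.mem_univ _)
  have hclass : ∀ i, AcyclicSet A {v | v ∈ Set.univ ∧ f' v = i} := by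
    intro i
    have : {v | v ∈ Set.univ ∧ f' v = i} =
        {v | v ∈ Set.univ ∧ f v = Equiv.swap 0 c i} := by
      ext v
      simp only [Set.mem_setOf_eq, hf', Equiv.apply_eq_iff_eq_symm_apply, Equiv.symm_swap]
    rw [this]
    exact hf2 _
  set S0 : Set V := {v | v ∈ Set.univ ∧ f' v = 0} with hS0
  have hv0 : v0 ∈ S0 := ⟨Set.mem_univ _, by simp [hf', hc]⟩
  set R : V → V → Prop := fun a b => a ∈ S0 ∧ b ∈ S0 ∧ A a b with hR
  have hac : ∀ x, ¬ Relation.TransGen R x x := hclass 0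
  -- u : vertex of S0 with no out-neighbor in S0
  haveI : IsTrans V (fun a b => Relation.TransGen R b a) :=
    ⟨fun _ _ _ h1 h2 => h2.trans h1⟩
  haveI : IsIrrefl V (fun a b => Relation.TransGen R b a) := ⟨hac⟩
  obtain ⟨u, huS, humax⟩ :=
    (Finite.wellFounded_of_trans_of_irrefl (fun a b => Relation.TransGen R b a)).has_min
      S0 ⟨v0, hv0⟩
  -- w : vertex of S0 with no in-neighbor in S0
  haveI : IsTrans V (Relation.TransGen R) := ⟨fun _ _ _ h1 h2 => h1.trans h2⟩
  haveI : IsIrrefl V (Relation.TransGen R) := ⟨hac⟩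
  obtain ⟨w, hwS, hwmin⟩ :=
    (Finite.wellFounded_of_trans_of_irrefl (Relation.TransGen R)).has_min S0 ⟨v0, hv0⟩
  refine ⟨u, w, ?_⟩
  set T : Set V := {x | A u x} ∪ {x | A x w} with hT
  have hT0 : ∀ v ∈ T, f' v ≠ 0 := by
    intro v hv h0
    have hvS : v ∈ S0 := ⟨Set.mem_univ _, h0⟩
    cases hv with
    | inl h => exact humax v hvS (Relation.TransGen.single ⟨huS, hvS, h⟩)
    | inr h => exact hwmin v hvS (Relation.TransGen.single ⟨hvS, hwS, h⟩)
  apply Nat.sInf_le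
  refine ⟨fun v => f' v - 1, ?_, ?_⟩
  · intro v hv
    have h1 := hbound v
    have h2 := hT0 v hv
    show f' v - 1 < k - 1
    omega
  · intro i
    refine acyclic_mono ?_ (hclass (i + 1))
    rintro v ⟨hvT, hvi⟩
    refine ⟨Set.mem_univ _, ?_⟩
    have h1 := hT0 v hvT
    have h2 : f' v - 1 = i := hvi
    omega
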